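/- arXiv:1608.08031 — 3 statements merged into one kernel-verified Lean document; each statement's English description precedes it below -/
import Mathlib

section
/- Saddle point solves dual exchange problem: Under the KKT conditions (I-W)x* = 0, 1ᵀy* = 0, y* ∈ ∂f(x*), the point y* minimizes the Fenchel conjugate f*(y) over the set {y ∈ ℝ^m : 1ᵀy = 0}. -/
open Matrix

/-- The KKT conditions imply y* solves the dual (OEP) problem. -/
theorem stmt_12 (m : ℕ) (f : (Fin m → ℝ) → ℝ) (hf : ConvexOn ℝ Set.univ f)
    (W : Matrix (Fin m) (Fin m) ℝ) (hsym : W.IsSymm)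
    (hstoch : W.mulVec (fun _ => (1:ℝ)) = fun _ => (1:ℝ))
    (hker : ∀ v : Fin m → ℝ, (1 - W).mulVec v = 0 ↔ ∃ c : ℝ, v = fun _ => c)
    (fconj : (Fin m → ℝ) → EReal)
    (hfconj : ∀ y, fconj y = ⨆ x : Fin m → ℝ, ((x ⬝ᵥ y - f x : ℝ) : EReal))
    (xs ys : Fin m → ℝ)
    (hprim : (1 - W).mulVec xs = 0)
    (hdual : (fun _ => (1:ℝ)) ⬝ᵥ ys = 0)
    (hsub : ∀ z : Fin m → ℝ, f z ≥ f xs + ys ⬝ᵥ (z - xs)) :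
    ∀ y : Fin m → ℝ, (fun _ => (1:ℝ)) ⬝ᵥ y = 0 → fconj ys ≤ fconj y := by
  intro y hy
  obtain ⟨c, hc⟩ := (hker xs).mp hprim
  have hxsdot : ∀ v : Fin m → ℝ, (fun _ => (1:ℝ)) ⬝ᵥ v = 0 → xs ⬝ᵥ v = 0 := by
    intro v hv
    have : xs ⬝ᵥ v = c * ((fun _ => (1:ℝ)) ⬝ᵥ v) := by
      subst hc
      simp [dotProduct, Finset.mul_sum]
    rw [this, hv, mul_zero]
  have h1 : xs ⬝ᵥ ys = 0 := hxsdot ys hdual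
  have h2 : xs ⬝ᵥ y = 0 := hxsdot y hy
  rw [hfconj ys, hfconj y]
  have hub : (⨆ x : Fin m → ℝ, ((x ⬝ᵥ ys - f x : ℝ) : EReal)) ≤ ((-(f xs) : ℝ) : EReal) := by
    apply iSup_le
    intro x
    have := hsub x
    have hcomm : ys ⬝ᵥ (x - xs) = x ⬝ᵥ ys - xs ⬝ᵥ ys := by
      rw [dotProduct_comm, sub_dotProduct]
    rw [hcomm, h1, sub_zero] at this
    exact_mod_cast (by linarith : x ⬝ᵥ ys - f x ≤ -(f xs))
  calc (⨆ x : Fin m → ℝ, ((x ⬝ᵥ ys - f x : ℝ) : EReal)) ≤ ((-(f xs) : ℝ) : EReal) := hub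
    _ = ((xs ⬝ᵥ y - f xs : ℝ) : EReal) := by rw [h2]; norm_num
    _ ≤ ⨆ x : Fin m → ℝ, ((x ⬝ᵥ y - f x : ℝ) : EReal) := le_iSup (fun x : Fin m → ℝ => ((x ⬝ᵥ y - f x : ℝ) : EReal)) xs
end

section
/- Transformation identity linking dual and primal residuals: Suppose W is symmetric with W1 = 1, y_k = (I-W)y'_k and y_{k+1} = (I-W)y'_{k+1} with 1ᵀy'_k = 1ᵀy'_{k+1} = 0, and (I-W)x_{k+1} + γ(y_{k+1} - y_k) = 0. Then γ²‖y'_{k+1} - y'_k‖²_{I-W} = ‖x̃_{k+1}‖²_{I-W}, where x̃_{k+1} = (I - (1/m)11ᵀ)x_{k+1}. -/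
open Matrix

/-- Transformation identity linking dual and primal residuals. -/
theorem stmt_16 (m : ℕ) (hm : 1 ≤ m) (W : Matrix (Fin m) (Fin m) ℝ)
    (hsym : W.IsSymm)
    (hstoch : W.mulVec (fun _ => (1:ℝ)) = fun _ => (1:ℝ))
    (γ : ℝ) (hγ : 0 < γ)
    (yk yk1 y'k y'k1 xk1 : Fin m → ℝ)
    (hyk : yk = (1 - W).mulVec y'k)
    (hyk1 : yk1 = (1 - W).mulVec y'k1)
    (hok : (fun _ => (1:ℝ)) ⬝ᵥ y'k = 0)
    (hok1 : (fun _ => (1:ℝ)) ⬝ᵥ y'k1 = 0)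
    (hrec : (1 - W).mulVec xk1 + γ • (yk1 - yk) = 0) :
    γ^2 * ((1 - W).mulVec (y'k1 - y'k) ⬝ᵥ (y'k1 - y'k)) =
      (1 - W).mulVec (xk1 - fun _ => ((m:ℝ)⁻¹ * ∑ i, xk1 i)) ⬝ᵥ
        (xk1 - fun _ => ((m:ℝ)⁻¹ * ∑ i, xk1 i)) := by
  set A : Matrix (Fin m) (Fin m) ℝ := 1 - W with hA
  set d : Fin m → ℝ := y'k1 - y'k with hd
  set c : ℝ := (m:ℝ)⁻¹ * ∑ i, xk1 i with hc
  set xt : Fin m → ℝ := xk1 - fun _ => c with hxt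
  have hAsymm : Aᵀ = A := by
    rw [hA, transpose_sub, transpose_one, hsym.eq]
  have hsymdot : ∀ u v : Fin m → ℝ, u ⬝ᵥ A.mulVec v = A.mulVec u ⬝ᵥ v := by
    intro u v
    rw [dotProduct_mulVec, ← mulVec_transpose, hAsymm]
  -- A annihilates constants
  have hconst : A.mulVec (fun _ => c) = 0 := by
    have h1 : (fun _ : Fin m => c) = c • (fun _ : Fin m => (1:ℝ)) := by
      funext i; simp
    rw [h1, mulVec_smul, hA, sub_mulVec, one_mulVec, hstoch, sub_self, smul_zero]
  -- Ad = yk1 - yk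
  have hAd : A.mulVec d = yk1 - yk := by
    rw [hd, hyk, hyk1, mulVec_sub]
  -- A xk1 = -γ • A d
  have hAx : A.mulVec xk1 = (-γ) • A.mulVec d := by
    have := hrec
    rw [hAd]
    have h2 : A.mulVec xk1 = -(γ • (yk1 - yk)) := by
      rw [eq_neg_iff_add_eq_zero]; exact hrec
    rw [h2, neg_smul]
  have hAxt : A.mulVec xt = (-γ) • A.mulVec d := by
    rw [hxt, mulVec_sub, hconst, sub_zero, hAx]
  rw [hAxt, smul_dotProduct]
  have h3 : A.mulVec d ⬝ᵥ xt = (-γ) * (A.mulVec d ⬝ᵥ d) := by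
    rw [← hsymdot d xt, hAxt, dotProduct_smul, hsymdot, smul_eq_mul]
  rw [h3, smul_eq_mul]; ring
end

section
/- Lower bound for the stochastic Lyapunov function: Let f : ℝ^m → ℝ be α-strongly convex (so Bregman distances satisfy D_{f}^{q}(u,v) ≥ (α/2)‖u-v‖²), γ > 0, and let W_k be symmetric with largest eigenvalue λ_max ∈ (0,1]. For q_{k+1} ∈ ∂(γf)(x_{k+1}) and x̄ ∈ ℝ^m, define V_{k+1} = D_{γf}^{q_{k+1}}(x̄, x_{k+1}) + ⟨W_k(x_{k+1} - x_k), x_{k+1} - x̄⟩ + (1/2)‖x_{k+1} - x_k‖²_{W_k}. Then V_{k+1} ≥ ((γα - λ_max)/2)‖x_{k+1} - x̄‖². In particular V_{k+1} > 0 whenever γ > λ_max/α and x_{k+1} ≠ x̄. -/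
open Matrix

/-- Lower bound for the stochastic Lyapunov function. -/
theorem stmt_18 (m : ℕ) (f : (Fin m → ℝ) → ℝ) (α : ℝ) (hα : 0 < α)
    (hstrong : ∀ (u v q : Fin m → ℝ),
      (∀ z : Fin m → ℝ, f z ≥ f v + q ⬝ᵥ (z - v)) →
      f u - f v - q ⬝ᵥ (u - v) ≥ (α/2) * ((u - v) ⬝ᵥ (u - v)))
    (γ : ℝ) (hγ : 0 < γ)
    (Wk : Matrix (Fin m) (Fin m) ℝ) (hsym : Wk.IsSymm)
    (hpsd : ∀ v : Fin m → ℝ, 0 ≤ Wk.mulVec v ⬝ᵥ v)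
    (lmax : ℝ) (hlmax0 : 0 < lmax) (hlmax1 : lmax ≤ 1)
    (hbound : ∀ v : Fin m → ℝ, Wk.mulVec v ⬝ᵥ v ≤ lmax * (v ⬝ᵥ v))
    (xk xk1 xbar qk1 : Fin m → ℝ)
    (hq : ∀ z : Fin m → ℝ, γ * f z ≥ γ * f xk1 + qk1 ⬝ᵥ (z - xk1))
    (V : ℝ)
    (hV : V = (γ * f xbar - γ * f xk1 - qk1 ⬝ᵥ (xbar - xk1))
      + Wk.mulVec (xk1 - xk) ⬝ᵥ (xk1 - xbar)
      + (1/2) * (Wk.mulVec (xk1 - xk) ⬝ᵥ (xk1 - xk))) :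
    V ≥ ((γ * α - lmax)/2) * ((xk1 - xbar) ⬝ᵥ (xk1 - xbar)) ∧
      (γ > lmax / α → xk1 ≠ xbar → 0 < V) := by
  set d := xk1 - xk with hd
  set e := xk1 - xbar with he
  -- symmetry of the quadratic form
  have hsym' : ∀ u v : Fin m → ℝ, Wk.mulVec u ⬝ᵥ v = Wk.mulVec v ⬝ᵥ u := by
    intro u v
    rw [dotProduct_comm (Wk.mulVec u) v, dotProduct_mulVec,
      ← Matrix.mulVec_transpose, hsym.eq]
  -- psd expansion
  have hkey : Wk.mulVec d ⬝ᵥ e + (1/2) * (Wk.mulVec d ⬝ᵥ d)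
      ≥ -(1/2) * (Wk.mulVec e ⬝ᵥ e) := by
    have h := hpsd (d + e)
    have hexp : Wk.mulVec (d + e) ⬝ᵥ (d + e)
        = Wk.mulVec d ⬝ᵥ d + 2 * (Wk.mulVec d ⬝ᵥ e) + Wk.mulVec e ⬝ᵥ e := by
      rw [Matrix.mulVec_add, add_dotProduct, dotProduct_add, dotProduct_add,
        hsym' e d]
      ring
    rw [hexp] at h
    linarith
  -- Bregman lower bound
  have hB : γ * f xbar - γ * f xk1 - qk1 ⬝ᵥ (xbar - xk1)
      ≥ (γ * α / 2) * (e ⬝ᵥ e) := by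
    have hsub : ∀ z : Fin m → ℝ, f z ≥ f xk1 + (γ⁻¹ • qk1) ⬝ᵥ (z - xk1) := by
      intro z
      have h1 := hq z
      rw [smul_dotProduct, smul_eq_mul]
      have h2 : γ⁻¹ * (γ * f xk1 + qk1 ⬝ᵥ (z - xk1)) ≤ γ⁻¹ * (γ * f z) :=
        mul_le_mul_of_nonneg_left h1 (inv_nonneg.mpr hγ.le)
      have e1 : γ⁻¹ * (γ * f z) = f z := by field_simp
      have e2 : γ⁻¹ * (γ * f xk1 + qk1 ⬝ᵥ (z - xk1))
          = f xk1 + γ⁻¹ * (qk1 ⬝ᵥ (z - xk1)) := by field_simp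
      rw [e1, e2] at h2
      linarith
    have h := hstrong xbar xk1 (γ⁻¹ • qk1) hsub
    rw [smul_dotProduct, smul_eq_mul] at h
    have hee : (xbar - xk1) ⬝ᵥ (xbar - xk1) = e ⬝ᵥ e := by
      have : xbar - xk1 = -e := by rw [he]; abel
      rw [this, neg_dotProduct, dotProduct_neg, neg_neg]
    have h2 := mul_le_mul_of_nonneg_left h hγ.le
    have lhs : γ * (f xbar - f xk1 - γ⁻¹ * (qk1 ⬝ᵥ (xbar - xk1)))
        = γ * f xbar - γ * f xk1 - qk1 ⬝ᵥ (xbar - xk1) := by field_simp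
    have rhs : γ * (α / 2 * ((xbar - xk1) ⬝ᵥ (xbar - xk1)))
        = γ * α / 2 * (e ⬝ᵥ e) := by rw [hee]; ring
    rw [lhs, rhs] at h2
    exact h2
  have hbe := hbound e
  have hmain : V ≥ ((γ * α - lmax)/2) * (e ⬝ᵥ e) := by
    rw [hV]
    nlinarith [hkey, hB, hbe]
  refine ⟨hmain, ?_⟩
  intro hγ2 hne
  have hene : e ≠ 0 := by
    intro h0
    apply hne
    have : xk1 - xbar = 0 := by rw [← he]; exact h0
    have := sub_eq_zero.mp this
    exact this
  have hpos : 0 < e ⬝ᵥ e := by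
    rcases (dotProduct_self_eq_zero (v := e)).not.mpr hene with h
    have hnn : 0 ≤ e ⬝ᵥ e := by
      apply Finset.sum_nonneg
      intro i _
      exact mul_self_nonneg _
    exact lt_of_le_of_ne hnn (Ne.symm h)
  have hcoef : 0 < (γ * α - lmax) / 2 := by
    have h' : lmax / α < γ := hγ2
    rw [div_lt_iff₀ hα] at h'
    nlinarith [h']
  calc 0 < ((γ * α - lmax)/2) * (e ⬝ᵥ e) := mul_pos hcoef hpos
    _ ≤ V := hmain
end
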